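/- Set R := S^s. Then, as R-submodules of S: (i) for every integer 1 ≤ q ≤ p_1, S(q e_1)^s = R·(x_2^{p_2}(x_2x_3⋯x_n)^{p_1−q}) + R·x_1^{q}; (ii) for every integer 1 ≤ q ≤ p_2, S(q e_2)^s = R·(x_1^{p_1}(x_1x_3⋯x_n)^{p_2−q}) + R·x_2^{q}; (iii) for every 3 ≤ i ≤ n and every integer 1 ≤ q ≤ p_i, S(q e_i)^s = R·(x_2^{p_2}(x_1x_2⋯x̂_i⋯x_n)^{p_i−q}) + R·x_i^{q} (where x̂_i means the factor x_i is omitted from the product x_1x_2⋯x_n); (iv) S(c)^s = R·x_1^{p_1} + R·x_2^{p_2}. -/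

import Mathlib

set_option synthInstance.maxHeartbeats 1000000
set_option maxHeartbeats 1000000

noncomputable section

open MvPolynomial

def LRel (ι : Type) [DecidableEq ι] (p : ι → ℕ) : AddSubgroup (Option ι → ℤ) :=
  AddSubgroup.closure
    { v | ∃ i : ι, v = (p i : ℤ) • Pi.single (some i) 1 - Pi.single (none : Option ι) 1 }

abbrev LGroup (ι : Type) [DecidableEq ι] (p : ι → ℕ) : Type :=
  (Option ι → ℤ) ⧸ LRel ι p

def egen {ι : Type} [DecidableEq ι] (p : ι → ℕ) (i : ι) : LGroup ι p :=
  QuotientAddGroup.mk (Pi.single (some i) 1)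

def cgen {ι : Type} [DecidableEq ι] (p : ι → ℕ) : LGroup ι p :=
  QuotientAddGroup.mk (Pi.single (none : Option ι) 1)

abbrev BPoly (n : ℕ) : Type := MvPolynomial (Fin n) ℂ

/-- The defining ideal `(xᵢ^{pᵢ} + x₁^{p₁} − λᵢx₂^{p₂} : 3 ≤ i ≤ n)` (0-indexed). -/
def BIdl (n : ℕ) [NeZero n] (p : Fin n → ℕ) (lam : Fin n → ℂ) : Ideal (BPoly n) :=
  Ideal.span { f | ∃ i : Fin n, 2 ≤ (i : ℕ) ∧
    f = X i ^ p i + X 0 ^ p 0 - C (lam i) * X 1 ^ p 1 }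

abbrev BAlg (n : ℕ) [NeZero n] (p : Fin n → ℕ) (lam : Fin n → ℂ) : Type :=
  BPoly n ⧸ BIdl n p lam

/-- The `L`-weight of an exponent vector, `deg xᵢ := eᵢ`. -/
def wtB {n : ℕ} (p : Fin n → ℕ) (m : Fin n →₀ ℕ) : LGroup (Fin n) p :=
  ∑ i : Fin n, m i • egen p i

def polyCompB {n : ℕ} (p : Fin n → ℕ) (y : LGroup (Fin n) p) :
    Submodule ℂ (BPoly n) where
  carrier := { f | ∀ m, coeff m f ≠ 0 → wtB p m = y }
  add_mem' := by
    intro f g hf hg m hm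
    by_cases h : coeff m f = 0
    · refine hg m fun h' => hm ?_
      simp [coeff_add, h, h']
    · exact hf m h
  zero_mem' := by
    intro m hm
    simp at hm
  smul_mem' := by
    intro c f hf m hm
    refine hf m fun h => hm ?_
    simp [coeff_smul, h]

/-- The homogeneous component `S_y ⊆ S` of the `L`-graded algebra `S`. -/
def SCompB (n : ℕ) [NeZero n] (p : Fin n → ℕ) (lam : Fin n → ℂ) (y : LGroup (Fin n) p) :
    Submodule ℂ (BAlg n p lam) :=
  (polyCompB p y).map (Ideal.Quotient.mkₐ ℂ (BIdl n p lam)).toLinearMap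

/-- The Veronese subring `S^x = ⊕_{k ∈ ℤ} S_{kx}`, as a subspace of `S`. -/
def SVerB (n : ℕ) [NeZero n] (p : Fin n → ℕ) (lam : Fin n → ℂ) (x : LGroup (Fin n) p) :
    Submodule ℂ (BAlg n p lam) :=
  ⨆ k : ℤ, SCompB n p lam (k • x)

/-- `S(y)^x = ⊕_{k ∈ ℤ} S_{y + kx}`, as a subspace of `S`. -/
def SShiftB (n : ℕ) [NeZero n] (p : Fin n → ℕ) (lam : Fin n → ℂ)
    (y x : LGroup (Fin n) p) : Submodule ℂ (BAlg n p lam) :=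
  ⨆ k : ℤ, SCompB n p lam (y + k • x)

/-- The polynomials `𝗎₁, …, 𝗎ₙ` (0-indexed). -/
def uPoly (n : ℕ) [NeZero n] (p : Fin n → ℕ) (i : Fin n) : BPoly n :=
  if (i : ℕ) = 0 then
    X 0 ^ (p 0 + p 1) * ∏ j ∈ Finset.univ.filter (fun j : Fin n => 2 ≤ (j : ℕ)), X j ^ p 1
  else if (i : ℕ) = 1 then
    X 1 ^ (p 0 + p 1) * ∏ j ∈ Finset.univ.filter (fun j : Fin n => 2 ≤ (j : ℕ)), X j ^ p 0
  else
    -(X 0 ^ p i * X 1 ^ (p 1 + p i) *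
      ∏ j ∈ Finset.univ.filter (fun j : Fin n => 2 ≤ (j : ℕ) ∧ j ≠ i), X j ^ p i)

/-- The elements `𝗎ᵢ ∈ S`. -/
def uElem (n : ℕ) [NeZero n] (p : Fin n → ℕ) (lam : Fin n → ℂ) (i : Fin n) :
    BAlg n p lam :=
  Ideal.Quotient.mk (BIdl n p lam) (uPoly n p i)

/-- The element `𝗏 = x₁x₂⋯xₙ ∈ S`. -/
def vElem (n : ℕ) [NeZero n] (p : Fin n → ℕ) (lam : Fin n → ℂ) : BAlg n p lam :=
  Ideal.Quotient.mk (BIdl n p lam) (∏ i : Fin n, X i)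

namespace St14

variable {n : ℕ} (p : Fin n → ℕ)

/-! ### Homomorphisms out of `LGroup` -/

def PP : ℤ := ∏ a, (p a : ℤ)

def Pdiv (a : Fin n) : ℤ := ∏ b ∈ Finset.univ.erase a, (p b : ℤ)

lemma p_mul_Pdiv (a : Fin n) : (p a : ℤ) * Pdiv p a = PP p := by
  simp only [Pdiv, PP]
  exact Finset.mul_prod_erase Finset.univ (fun b => (p b : ℤ)) (Finset.mem_univ a)

lemma PP_pos (hp : ∀ a, 1 ≤ p a) : 0 < PP p :=
  Finset.prod_pos fun a _ => by exact_mod_cast hp a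

def degF : (Option (Fin n) → ℤ) →+ ℤ where
  toFun f := PP p * f none + ∑ a, Pdiv p a * f (some a)
  map_zero' := by simp
  map_add' f g := by
    simp only [Pi.add_apply, mul_add, Finset.sum_add_distrib]
    ring

lemma degF_apply (f : Option (Fin n) → ℤ) :
    degF p f = PP p * f none + ∑ a, Pdiv p a * f (some a) := rfl

lemma degF_single_some (i : Fin n) (c : ℤ) :
    degF p (Pi.single (some i) c) = Pdiv p i * c := by
  rw [degF_apply]
  simp [Pi.single_apply, Finset.sum_ite_eq']

lemma degF_single_none (c : ℤ) :
    degF p (Pi.single (none : Option (Fin n)) c) = PP p * c := by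
  rw [degF_apply]
  simp [Pi.single_apply]

lemma degF_rel (i : Fin n) :
    degF p ((p i : ℤ) • Pi.single (some i) 1 - Pi.single (none : Option (Fin n)) 1) = 0 := by
  rw [map_sub, map_zsmul, degF_single_some, degF_single_none, mul_one, mul_one, smul_eq_mul,
    p_mul_Pdiv, sub_self]

lemma LRel_le_ker_degF : LRel (Fin n) p ≤ (degF p).ker := by
  rw [LRel, AddSubgroup.closure_le]
  rintro v ⟨i, rfl⟩
  exact degF_rel p i

def degL : LGroup (Fin n) p →+ ℤ :=
  QuotientAddGroup.lift (LRel (Fin n) p) (degF p) (fun _ hx => LRel_le_ker_degF p hx)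

lemma degL_mk (f : Option (Fin n) → ℤ) :
    degL p (QuotientAddGroup.mk f) = degF p f := rfl

lemma degL_egen (i : Fin n) : degL p (egen p i) = Pdiv p i := by
  rw [egen, degL_mk, degF_single_some, mul_one]

lemma degL_cgen : degL p (cgen p) = PP p := by
  rw [cgen, degL_mk, degF_single_none, mul_one]

def resF (a : Fin n) : (Option (Fin n) → ℤ) →+ ZMod (p a) where
  toFun f := (f (some a) : ZMod (p a))
  map_zero' := by simp
  map_add' f g := by push_cast [Pi.add_apply]; ring

lemma resF_apply (a : Fin n) (f : Option (Fin n) → ℤ) :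
    resF p a f = (f (some a) : ZMod (p a)) := rfl

lemma resF_rel (a i : Fin n) :
    resF p a ((p i : ℤ) • Pi.single (some i) 1 - Pi.single (none : Option (Fin n)) 1) = 0 := by
  rw [resF_apply, Pi.sub_apply, Pi.smul_apply]
  simp only [Pi.single_apply]
  rcases eq_or_ne a i with rfl | h
  · simp [ZMod.natCast_self]
  · simp [Ne.symm h, show (some a ≠ some i) from by simpa using h]

def resL (a : Fin n) : LGroup (Fin n) p →+ ZMod (p a) :=
  QuotientAddGroup.lift (LRel (Fin n) p) (resF p a) (fun _ hx => by
    have : LRel (Fin n) p ≤ (resF p a).ker := by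
      rw [LRel, AddSubgroup.closure_le]
      rintro v ⟨i, rfl⟩
      exact resF_rel p a i
    exact this hx)

lemma resL_mk (a : Fin n) (f : Option (Fin n) → ℤ) :
    resL p a (QuotientAddGroup.mk f) = (f (some a) : ZMod (p a)) := rfl

lemma resL_egen (a i : Fin n) : resL p a (egen p i) = if a = i then 1 else 0 := by
  rw [egen, resL_mk]
  simp only [Pi.single_apply]
  rcases eq_or_ne a i with rfl | h
  · simp
  · simp [h, show (some a ≠ some i) from by simpa using h]

lemma resL_cgen (a : Fin n) : resL p a (cgen p) = 0 := by
  rw [cgen, resL_mk]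
  simp [Pi.single_apply]

/-- The key relation in `L`: `pₐ • eₐ = c`. -/
lemma psmul_egen (a : Fin n) : p a • egen p a = cgen p := by
  rw [egen, cgen]
  have h1 : (p a • QuotientAddGroup.mk (Pi.single (some a) 1) : LGroup (Fin n) p)
      = QuotientAddGroup.mk (p a • Pi.single (some a) 1) := by
    induction p a with
    | zero => rw [zero_nsmul, zero_nsmul]; rfl
    | succ k ih => rw [succ_nsmul, succ_nsmul, ih]; rfl
  rw [h1, QuotientAddGroup.eq]
  have h2 : ((p a : ℤ) • Pi.single (some a) 1 - Pi.single (none : Option (Fin n)) 1)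
      ∈ LRel (Fin n) p := AddSubgroup.subset_closure ⟨a, rfl⟩
  have h3 : -(p a • (Pi.single (some a) 1 : Option (Fin n) → ℤ))
        + (Pi.single (none : Option (Fin n)) 1 : Option (Fin n) → ℤ)
      = -((p a : ℤ) • Pi.single (some a) 1 - Pi.single (none : Option (Fin n)) 1) := by
    rw [natCast_zsmul]; abel
  rw [h3]
  exact AddSubgroup.neg_mem _ h2

end St14

namespace St14

variable {n : ℕ} (p : Fin n → ℕ)

/-! ### Weights -/

lemma wtB_add (u v : Fin n →₀ ℕ) : wtB p (u + v) = wtB p u + wtB p v := by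
  rw [wtB, wtB, wtB, ← Finset.sum_add_distrib]
  refine Finset.sum_congr rfl fun i _ => ?_
  rw [Finsupp.add_apply, add_smul]

lemma wtB_single (x : Fin n) (c : ℕ) : wtB p (Finsupp.single x c) = c • egen p x := by
  rw [wtB]
  rw [Finset.sum_eq_single x]
  · rw [Finsupp.single_eq_same]
  · intro b _ hb
    simp [Finsupp.single_eq_of_ne' (Ne.symm hb), zero_nsmul]
  · intro h; exact absurd (Finset.mem_univ x) h

lemma degL_wtB (m : Fin n →₀ ℕ) :
    degL p (wtB p m) = ∑ a, (m a : ℤ) * Pdiv p a := by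
  rw [wtB, map_sum]
  refine Finset.sum_congr rfl fun i _ => ?_
  rw [map_nsmul, degL_egen, nsmul_eq_mul]

lemma resL_wtB (a : Fin n) (m : Fin n →₀ ℕ) :
    resL p a (wtB p m) = (m a : ZMod (p a)) := by
  rw [wtB, map_sum]
  rw [Finset.sum_eq_single a]
  · rw [map_nsmul, resL_egen, if_pos rfl, nsmul_eq_mul, mul_one]
  · intro b _ hb
    rw [map_nsmul, resL_egen, if_neg (Ne.symm hb), smul_zero]
  · intro h; exact absurd (Finset.mem_univ a) h

/-! ### Homogeneous components -/

lemma mem_polyCompB_iff (y : LGroup (Fin n) p) (f : BPoly n) :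
    f ∈ polyCompB p y ↔ ∀ m, MvPolynomial.coeff m f ≠ 0 → wtB p m = y := Iff.rfl

lemma monomial_mem_polyCompB (u : Fin n →₀ ℕ) (c : ℂ) :
    MvPolynomial.monomial u c ∈ polyCompB p (wtB p u) := by
  intro m hm
  rw [MvPolynomial.coeff_monomial] at hm
  by_cases h : u = m
  · rw [h]
  · simp [h] at hm

lemma mul_mem_polyCompB {y₁ y₂ : LGroup (Fin n) p} {f g : BPoly n}
    (hf : f ∈ polyCompB p y₁) (hg : g ∈ polyCompB p y₂) :
    f * g ∈ polyCompB p (y₁ + y₂) := by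
  intro m hm
  rw [MvPolynomial.coeff_mul] at hm
  obtain ⟨⟨u, v⟩, huv, hne⟩ := Finset.exists_ne_zero_of_sum_ne_zero hm
  have huv' : u + v = m := Finset.HasAntidiagonal.mem_antidiagonal.mp huv
  have hu : MvPolynomial.coeff u f ≠ 0 := fun h => hne (by rw [h, zero_mul])
  have hv : MvPolynomial.coeff v g ≠ 0 := fun h => hne (by rw [h, mul_zero])
  rw [← huv', wtB_add, hf u hu, hg v hv]

variable {nn : ℕ} [NeZero nn] (q : Fin nn → ℕ) (lam : Fin nn → ℂ)

lemma mem_SCompB_iff (y : LGroup (Fin nn) q) (w : BAlg nn q lam) :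
    w ∈ SCompB nn q lam y ↔
      ∃ f ∈ polyCompB q y, Ideal.Quotient.mk (BIdl nn q lam) f = w := by
  rw [SCompB, Submodule.mem_map]
  simp only [AlgHom.toLinearMap_apply, Ideal.Quotient.mkₐ_eq_mk]

lemma mul_mem_SCompB {y₁ y₂ : LGroup (Fin nn) q} {w₁ w₂ : BAlg nn q lam}
    (h₁ : w₁ ∈ SCompB nn q lam y₁) (h₂ : w₂ ∈ SCompB nn q lam y₂) :
    w₁ * w₂ ∈ SCompB nn q lam (y₁ + y₂) := by
  rw [mem_SCompB_iff] at h₁ h₂ ⊢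
  obtain ⟨f, hf, rfl⟩ := h₁
  obtain ⟨g, hg, rfl⟩ := h₂
  exact ⟨f * g, mul_mem_polyCompB q hf hg, (map_mul _ _ _)⟩

lemma mk_monomial_mem_SCompB (u : Fin nn →₀ ℕ) :
    Ideal.Quotient.mk (BIdl nn q lam) (MvPolynomial.monomial u 1)
      ∈ SCompB nn q lam (wtB q u) := by
  rw [mem_SCompB_iff]
  exact ⟨_, monomial_mem_polyCompB q u 1, rfl⟩

lemma SCompB_le_of_monomials (y : LGroup (Fin nn) q) (Q : Submodule ℂ (BAlg nn q lam))
    (h : ∀ u : Fin nn →₀ ℕ, wtB q u = y →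
      Ideal.Quotient.mk (BIdl nn q lam) (MvPolynomial.monomial u 1) ∈ Q) :
    SCompB nn q lam y ≤ Q := by
  intro w hw
  rw [mem_SCompB_iff] at hw
  obtain ⟨f, hf, rfl⟩ := hw
  rw [← MvPolynomial.support_sum_monomial_coeff f, map_sum]
  refine Submodule.sum_mem Q fun u hu => ?_
  have h1 : MvPolynomial.monomial u (MvPolynomial.coeff u f)
      = (MvPolynomial.coeff u f) • MvPolynomial.monomial u (1:ℂ) := by
    rw [MvPolynomial.smul_monomial, smul_eq_mul, mul_one]
  have h2 : Ideal.Quotient.mk (BIdl nn q lam) (MvPolynomial.coeff u f •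
        MvPolynomial.monomial u (1:ℂ))
      = MvPolynomial.coeff u f • Ideal.Quotient.mk (BIdl nn q lam)
        (MvPolynomial.monomial u (1:ℂ)) := by
    rw [← Ideal.Quotient.mkₐ_eq_mk ℂ (BIdl nn q lam), map_smul]
  rw [h1, h2]
  exact Q.smul_mem _ (h u (hf u (MvPolynomial.mem_support_iff.mp hu)))

end St14

namespace St14

/-! ### The arithmetic contradiction at terminal states -/

lemma terminal_contradiction {n : ℕ} (hn : 3 ≤ n) (p : Fin n → ℕ) (hp : ∀ a, 2 ≤ p a)
    (t : Fin n) (q d : ℕ) (hq : 1 ≤ q) (hqd : q + d = p t) (k : ℤ) (c : Fin n → ℤ)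
    (m : Fin n → ℕ)
    (hmt : (m t : ℤ) = q + k + p t * c t)
    (hma : ∀ a, a ≠ t → (m a : ℤ) = k + p a * c a)
    (hsum : ∑ a, c a = 0)
    (bt : m t < q)
    (ba : ∀ a, a ≠ t → (m a : ℤ) ≤ (p a : ℤ) + d - 1) : False := by
  have hpt : (2 : ℤ) ≤ p t := by exact_mod_cast hp t
  have hqt : (q : ℤ) ≤ p t := by
    have := hqd; omega
  have hsum' : ∑ a ∈ Finset.univ.erase t, c a = - c t := by
    have := Finset.add_sum_erase Finset.univ c (Finset.mem_univ t)
    rw [hsum] at this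
    linarith
  rcases lt_or_ge k 0 with hk | hk
  · -- k < 0 : every c a (a ≠ t) is ≥ 1, so c t ≤ -(n-1) ≤ -2, m t < 0.
    have hca : ∀ a ∈ Finset.univ.erase t, 1 ≤ c a := by
      intro a ha
      have hat := Finset.ne_of_mem_erase ha
      have h1 := hma a hat
      have h2 : (0 : ℤ) ≤ (m a : ℤ) := Int.natCast_nonneg _
      have hpa : (2 : ℤ) ≤ p a := by exact_mod_cast hp a
      by_contra hlt
      push_neg at hlt
      have : c a ≤ 0 := by omega
      nlinarith
    have hcard : (Finset.univ.erase t).card = n - 1 := by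
      rw [Finset.card_erase_of_mem (Finset.mem_univ t), Finset.card_univ, Fintype.card_fin]
    have hsumge : (2 : ℤ) ≤ ∑ a ∈ Finset.univ.erase t, c a := by
      have h := Finset.card_nsmul_le_sum (Finset.univ.erase t) c 1 hca
      rw [nsmul_eq_mul, mul_one, hcard] at h
      have h2 : (2 : ℤ) ≤ ((n - 1 : ℕ) : ℤ) := by
        have : 3 ≤ n := hn
        omega
      exact le_trans h2 h
    have hct : c t ≤ -2 := by linarith
    have : (0 : ℤ) ≤ (m t : ℤ) := Int.natCast_nonneg _
    nlinarith
  · rcases lt_or_ge k (d : ℤ) with hkd | hkd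
    · -- 0 ≤ k < d : then q + k < p t forces m t < 0.
      have h1 : (m t : ℤ) ≤ (q : ℤ) - 1 := by omega
      have hct : c t ≤ -1 := by nlinarith
      have : (0 : ℤ) ≤ (m t : ℤ) := Int.natCast_nonneg _
      have hd : (q : ℤ) + d = p t := by exact_mod_cast hqd
      nlinarith
    · -- d ≤ k : all c a ≤ 0 for a ≠ t and c t ≤ -1, contradicting ∑ c = 0.
      have hca : ∀ a ∈ Finset.univ.erase t, c a ≤ 0 := by
        intro a ha
        have hat := Finset.ne_of_mem_erase ha
        have h1 := hma a hat
        have h2 := ba a hat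
        have hpa : (2 : ℤ) ≤ p a := by exact_mod_cast hp a
        by_contra hlt
        push_neg at hlt
        have : 1 ≤ c a := hlt
        nlinarith
      have hct : c t ≤ -1 := by
        have h1 : (m t : ℤ) ≤ (q : ℤ) - 1 := by omega
        nlinarith
      have : ∑ a ∈ Finset.univ.erase t, c a ≤ 0 := Finset.sum_nonpos hca
      omega

/-! ### Submodule multiplication helpers -/

lemma mem_mul_span_singleton {S : Type*} [CommRing S] [Algebra ℂ S]
    (M : Submodule ℂ S) (g x : S) (hx : x ∈ M * Submodule.span ℂ {g}) :
    ∃ r ∈ M, x = r * g := by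
  refine Submodule.mul_induction_on hx ?_ ?_
  · intro r hr y hy
    obtain ⟨c, rfl⟩ := Submodule.mem_span_singleton.mp hy
    exact ⟨c • r, M.smul_mem c hr, by rw [mul_smul_comm, smul_mul_assoc]⟩
  · rintro x y ⟨r, hr, rfl⟩ ⟨r', hr', rfl⟩
    exact ⟨r + r', M.add_mem hr hr', by rw [add_mul]⟩

lemma mul_mem_mul_span_singleton {S : Type*} [CommRing S] [Algebra ℂ S]
    (M : Submodule ℂ S) (g r : S) (hr : r ∈ M) :
    r * g ∈ M * Submodule.span ℂ {g} :=
  Submodule.mul_mem_mul hr (Submodule.mem_span_singleton_self g)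

/-! ### Monomial arithmetic -/

lemma monomial_one_mul {n : ℕ} (u v : Fin n →₀ ℕ) :
    (MvPolynomial.monomial u (1:ℂ) : BPoly n) * MvPolynomial.monomial v 1
      = MvPolynomial.monomial (u + v) 1 := by
  rw [MvPolynomial.monomial_mul, one_mul]

lemma prod_monomial_one {n : ℕ} (s : Finset (Fin n)) (f : Fin n → (Fin n →₀ ℕ)) :
    (∏ a ∈ s, (MvPolynomial.monomial (f a) (1:ℂ) : BPoly n))
      = MvPolynomial.monomial (∑ a ∈ s, f a) 1 := by
  classical
  induction s using Finset.induction_on with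
  | empty => simp [MvPolynomial.monomial_eq]
  | insert _ _ hx ih =>
      rename_i a s
      rw [Finset.prod_insert hx, Finset.sum_insert hx, ih, monomial_one_mul]

lemma decomp_of_le {n : ℕ} (m u : Fin n →₀ ℕ) (h : ∀ a, u a ≤ m a) :
    ∃ m' : Fin n →₀ ℕ, m = m' + u := by
  refine ⟨m - u, ?_⟩
  ext a
  rw [Finsupp.add_apply, Finsupp.tsub_apply]
  have := h a
  omega

end St14

namespace St14

open MvPolynomial

section Engine

variable {n : ℕ} [NeZero n] (p : Fin n → ℕ) (lam : Fin n → ℂ)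

def sdeg : LGroup (Fin n) p := ∑ i, egen p i

lemma degL_sdeg : degL p (sdeg p) = ∑ a, Pdiv p a := by
  rw [sdeg, map_sum]
  exact Finset.sum_congr rfl fun a _ => degL_egen p a

lemma resL_sdeg (a : Fin n) : resL p a (sdeg p) = 1 := by
  rw [sdeg, map_sum]
  rw [Finset.sum_eq_single a]
  · rw [resL_egen, if_pos rfl]
  · intro b _ hb; rw [resL_egen, if_neg (Ne.symm hb)]
  · intro hx; exact absurd (Finset.mem_univ a) hx

lemma wtB_zero : wtB p 0 = 0 := by
  rw [wtB]
  exact Finset.sum_eq_zero fun a _ => by simp [zero_nsmul]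

lemma wtB_finsetSum (s : Finset (Fin n)) (f : Fin n → (Fin n →₀ ℕ)) :
    wtB p (∑ a ∈ s, f a) = ∑ a ∈ s, wtB p (f a) := by
  classical
  induction s using Finset.induction_on with
  | empty => simpa using wtB_zero p
  | insert _ _ hx ih =>
      rename_i a s
      rw [Finset.sum_insert hx, Finset.sum_insert hx, wtB_add, ih]

def Esupp (t h : Fin n) (d : ℕ) : Fin n →₀ ℕ :=
  Finsupp.single h (p h) + ∑ a ∈ Finset.univ.erase t, Finsupp.single a d

lemma Esupp_apply (t h : Fin n) (hth : t ≠ h) (d : ℕ) (x : Fin n) :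
    Esupp p t h d x = if x = h then p h + d else if x = t then 0 else d := by
  rw [Esupp, Finsupp.add_apply]
  have hsum : (∑ a ∈ Finset.univ.erase t, Finsupp.single a d) x
      = if x = t then 0 else d := by
    rw [Finsupp.finset_sum_apply]
    rcases eq_or_ne x t with rfl | hx
    · rw [if_pos rfl]
      refine Finset.sum_eq_zero fun b hb => ?_
      exact Finsupp.single_eq_of_ne' (Finset.ne_of_mem_erase hb)
    · rw [if_neg hx]
      rw [Finset.sum_eq_single x]
      · exact Finsupp.single_eq_same
      · intro b _ hb; exact Finsupp.single_eq_of_ne' hb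
      · intro hxx; exact absurd (Finset.mem_erase.mpr ⟨hx, Finset.mem_univ x⟩) hxx
  rw [hsum, Finsupp.single_apply]
  rcases eq_or_ne x h with rfl | hx
  · rw [if_pos rfl, if_pos rfl, if_neg (Ne.symm hth)]
  · rw [if_neg hx, if_neg (fun hh : h = x => hx hh.symm), zero_add]

lemma wt_Esupp (t h : Fin n) (hth : t ≠ h) (q d : ℕ) (hqd : q + d = p t) :
    wtB p (Esupp p t h d) = q • egen p t + (d : ℤ) • sdeg p := by
  rw [Esupp, wtB_add, wtB_single, wtB_finsetSum]
  have h1 : ∀ a ∈ Finset.univ.erase t, wtB p (Finsupp.single a d) = d • egen p a :=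
    fun a _ => wtB_single p a d
  rw [Finset.sum_congr rfl h1, psmul_egen]
  have h2 : egen p t + ∑ a ∈ Finset.univ.erase t, egen p a = sdeg p := by
    rw [sdeg]
    exact Finset.add_sum_erase Finset.univ (egen p) (Finset.mem_univ t)
  have h3 : (d : ℤ) • sdeg p = d • sdeg p := natCast_zsmul _ _
  rw [h3, ← h2]
  rw [← Finset.smul_sum (r := d) (f := egen p) (s := Finset.univ.erase t)]
  rw [← psmul_egen p t, ← hqd, add_nsmul]
  have h4 : d • (egen p t + ∑ a ∈ Finset.univ.erase t, egen p a)
      = d • egen p t + d • ∑ a ∈ Finset.univ.erase t, egen p a := nsmul_add _ _ _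
  rw [h4]
  abel

def muM (t h : Fin n) (d : ℕ) (m : Fin n →₀ ℕ) : ℕ :=
  ∑ a ∈ (Finset.univ.erase t).erase h, ((d - m a) + (m a - (p a + d - 1)))

lemma muM_lt (t h : Fin n) (d : ℕ) (m v : Fin n →₀ ℕ) (a : Fin n)
    (ha : a ∈ (Finset.univ.erase t).erase h)
    (heq : ∀ x ∈ (Finset.univ.erase t).erase h, x ≠ a → v x = m x)
    (hlt : (d - v a) + (v a - (p a + d - 1)) < (d - m a) + (m a - (p a + d - 1))) :
    muM p t h d v < muM p t h d m := by
  rw [muM, muM, ← Finset.add_sum_erase _ _ ha, ← Finset.add_sum_erase _ _ ha]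
  have hsame : ∑ x ∈ ((Finset.univ.erase t).erase h).erase a,
      ((d - v x) + (v x - (p x + d - 1)))
      = ∑ x ∈ ((Finset.univ.erase t).erase h).erase a,
      ((d - m x) + (m x - (p x + d - 1))) := by
    refine Finset.sum_congr rfl fun x hx => ?_
    rw [heq x (Finset.mem_of_mem_erase hx) (Finset.ne_of_mem_erase hx)]
  omega

variable (R : Subalgebra ℂ (BAlg n p lam))

def PsubM (t : Fin n) (q : ℕ) (E : Fin n →₀ ℕ) : Submodule ℂ (BAlg n p lam) :=
  (Subalgebra.toSubmodule R) * Submodule.span ℂ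
      {Ideal.Quotient.mk (BIdl n p lam) (MvPolynomial.monomial E 1)}
  + (Subalgebra.toSubmodule R) * Submodule.span ℂ
      {Ideal.Quotient.mk (BIdl n p lam) (MvPolynomial.monomial (Finsupp.single t q) 1)}

lemma R_mono (hR : Subalgebra.toSubmodule R = SVerB n p lam (∑ i, egen p i)) (k : ℤ) (u : Fin n →₀ ℕ) (hu : wtB p u = k • sdeg p) :
    Ideal.Quotient.mk (BIdl n p lam) (MvPolynomial.monomial u 1)
      ∈ Subalgebra.toSubmodule R := by
  rw [hR]
  have h1 := mk_monomial_mem_SCompB p lam u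
  rw [hu] at h1
  exact le_iSup (fun k : ℤ => SCompB n p lam (k • ∑ i, egen p i)) k h1

lemma doneT (hR : Subalgebra.toSubmodule R = SVerB n p lam (∑ i, egen p i)) (t : Fin n) (q : ℕ) (E : Fin n →₀ ℕ) (k : ℤ) (m : Fin n →₀ ℕ)
    (hw : wtB p m = q • egen p t + k • sdeg p) (hqm : q ≤ m t) :
    Ideal.Quotient.mk (BIdl n p lam) (MvPolynomial.monomial m 1) ∈ PsubM p lam R t q E := by
  obtain ⟨m', hm'⟩ := decomp_of_le m (Finsupp.single t q) (by
    intro a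
    rw [Finsupp.single_apply]
    split
    · next hh => subst hh; exact hqm
    · exact Nat.zero_le _)
  have hw' : wtB p m' = k • sdeg p := by
    have h1 : wtB p m' + wtB p (Finsupp.single t q) = q • egen p t + k • sdeg p := by
      rw [← wtB_add, ← hm', hw]
    rw [wtB_single, add_comm (q • egen p t) (k • sdeg p)] at h1
    exact add_right_cancel h1
  have h2 : Ideal.Quotient.mk (BIdl n p lam) (MvPolynomial.monomial m 1)
      = Ideal.Quotient.mk (BIdl n p lam) (MvPolynomial.monomial m' 1)
        * Ideal.Quotient.mk (BIdl n p lam) (MvPolynomial.monomial (Finsupp.single t q) 1) := by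
    rw [← map_mul, monomial_one_mul, ← hm']
  rw [PsubM, Submodule.add_eq_sup]
  refine Submodule.mem_sup_right ?_
  rw [h2]
  exact mul_mem_mul_span_singleton _ _ _ (R_mono p lam R hR k m' hw')

lemma doneG1 (hR : Subalgebra.toSubmodule R = SVerB n p lam (∑ i, egen p i)) (t h : Fin n) (hth : t ≠ h) (q d : ℕ) (hqd : q + d = p t) (k : ℤ)
    (m : Fin n →₀ ℕ)
    (hw : wtB p m = q • egen p t + k • sdeg p) (hdvd : ∀ a, Esupp p t h d a ≤ m a) :
    Ideal.Quotient.mk (BIdl n p lam) (MvPolynomial.monomial m 1)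
      ∈ PsubM p lam R t q (Esupp p t h d) := by
  obtain ⟨m', hm'⟩ := decomp_of_le m (Esupp p t h d) hdvd
  have hw' : wtB p m' = (k - (d : ℤ)) • sdeg p := by
    have h1 : wtB p m' + wtB p (Esupp p t h d) = q • egen p t + k • sdeg p := by
      rw [← wtB_add, ← hm', hw]
    rw [wt_Esupp p t h hth q d hqd] at h1
    have h2 : (k - (d : ℤ)) • sdeg p + (q • egen p t + (d : ℤ) • sdeg p)
        = q • egen p t + k • sdeg p := by
      rw [sub_smul]; abel
    exact add_right_cancel (h1.trans h2.symm)
  have h2 : Ideal.Quotient.mk (BIdl n p lam) (MvPolynomial.monomial m 1)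
      = Ideal.Quotient.mk (BIdl n p lam) (MvPolynomial.monomial m' 1)
        * Ideal.Quotient.mk (BIdl n p lam) (MvPolynomial.monomial (Esupp p t h d) 1) := by
    rw [← map_mul, monomial_one_mul, ← hm']
  rw [PsubM, Submodule.add_eq_sup]
  refine Submodule.mem_sup_left ?_
  rw [h2]
  exact mul_mem_mul_span_singleton _ _ _ (R_mono p lam R hR (k - (d:ℤ)) m' hw')

lemma step_rewrite (m' : Fin n →₀ ℕ) (a b c : Fin n) (α β : ℂ)
    (hid : Ideal.Quotient.mk (BIdl n p lam) (MvPolynomial.X a ^ p a)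
      = α • Ideal.Quotient.mk (BIdl n p lam) (MvPolynomial.X b ^ p b)
        + β • Ideal.Quotient.mk (BIdl n p lam) (MvPolynomial.X c ^ p c)) :
    Ideal.Quotient.mk (BIdl n p lam)
        (MvPolynomial.monomial (m' + Finsupp.single a (p a)) 1)
      = α • Ideal.Quotient.mk (BIdl n p lam)
          (MvPolynomial.monomial (m' + Finsupp.single b (p b)) 1)
        + β • Ideal.Quotient.mk (BIdl n p lam)
          (MvPolynomial.monomial (m' + Finsupp.single c (p c)) 1) := by
  have e : ∀ x : Fin n,
      Ideal.Quotient.mk (BIdl n p lam)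
          (MvPolynomial.monomial (m' + Finsupp.single x (p x)) 1)
        = Ideal.Quotient.mk (BIdl n p lam) (MvPolynomial.monomial m' 1)
          * Ideal.Quotient.mk (BIdl n p lam) (MvPolynomial.X x ^ p x) := by
    intro x
    rw [← map_mul, MvPolynomial.X_pow_eq_monomial, monomial_one_mul]
  rw [e, e, e, hid, mul_add, mul_smul_comm, mul_smul_comm]

lemma wt_swap (m' : Fin n →₀ ℕ) (x y : Fin n) :
    wtB p (m' + Finsupp.single x (p x)) = wtB p (m' + Finsupp.single y (p y)) := by
  rw [wtB_add, wtB_add, wtB_single, wtB_single, psmul_egen, psmul_egen]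

lemma engine (hn : 3 ≤ n) (hp : ∀ a, 2 ≤ p a)
    (hR : Subalgebra.toSubmodule R = SVerB n p lam (∑ i, egen p i))
    (t h : Fin n) (hth : t ≠ h) (q d : ℕ) (hq : 1 ≤ q) (hqd : q + d = p t)
    (Hmv : ∀ a, a ≠ t → a ≠ h →
      (∃ α β : ℂ, Ideal.Quotient.mk (BIdl n p lam) (MvPolynomial.X a ^ p a)
        = α • Ideal.Quotient.mk (BIdl n p lam) (MvPolynomial.X t ^ p t)
          + β • Ideal.Quotient.mk (BIdl n p lam) (MvPolynomial.X h ^ p h)) ∧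
      (∃ γ δ' : ℂ, Ideal.Quotient.mk (BIdl n p lam) (MvPolynomial.X h ^ p h)
        = γ • Ideal.Quotient.mk (BIdl n p lam) (MvPolynomial.X t ^ p t)
          + δ' • Ideal.Quotient.mk (BIdl n p lam) (MvPolynomial.X a ^ p a))) :
    ∀ (M : ℕ) (m : Fin n →₀ ℕ) (k : ℤ), muM p t h d m ≤ M →
      wtB p m = q • egen p t + k • sdeg p →
      Ideal.Quotient.mk (BIdl n p lam) (MvPolynomial.monomial m 1)
        ∈ PsubM p lam R t q (Esupp p t h d) := by
  intro M
  induction M using Nat.strong_induction_on with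
  | _ M IH =>
  intro m k hmu hw
  have hqt : q ≤ p t := by omega
  by_cases h1 : q ≤ m t
  · exact doneT p lam R hR t q _ k m hw h1
  push_neg at h1
  by_cases h2 : ∃ a, (a ≠ t ∧ a ≠ h) ∧ p a + d ≤ m a
  · obtain ⟨a, ⟨hat, hah⟩, hpa⟩ := h2
    obtain ⟨m', hm'⟩ := decomp_of_le m (Finsupp.single a (p a)) (by
      intro x
      rw [Finsupp.single_apply]
      split
      · next hh => subst hh; omega
      · exact Nat.zero_le _)
    obtain ⟨α, β, hid⟩ := (Hmv a hat hah).1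
    have hma : m a = m' a + p a := by
      rw [hm', Finsupp.add_apply, Finsupp.single_eq_same]
    have hmx : ∀ x, x ≠ a → m x = m' x := by
      intro x hx
      rw [hm', Finsupp.add_apply, Finsupp.single_eq_of_ne' (Ne.symm hx), add_zero]
    rw [hm', step_rewrite p lam m' a t h α β hid]
    refine Submodule.add_mem _ (Submodule.smul_mem _ _ ?_) (Submodule.smul_mem _ _ ?_)
    · -- the `t`-branch is done
      have hw1 : wtB p (m' + Finsupp.single t (p t)) = q • egen p t + k • sdeg p := by
        rw [wt_swap p m' t a, ← hm', hw]
      refine doneT p lam R hR t q _ k _ hw1 ?_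
      rw [Finsupp.add_apply, Finsupp.single_eq_same]
      omega
    · -- the `h`-branch recurses
      have hw2 : wtB p (m' + Finsupp.single h (p h)) = q • egen p t + k • sdeg p := by
        rw [wt_swap p m' h a, ← hm', hw]
      have hmem : a ∈ (Finset.univ.erase t).erase h :=
        Finset.mem_erase.mpr ⟨hah, Finset.mem_erase.mpr ⟨hat, Finset.mem_univ a⟩⟩
      have hva : (m' + Finsupp.single h (p h)) a = m a - p a := by
        rw [Finsupp.add_apply, Finsupp.single_eq_of_ne' (Ne.symm hah), add_zero]
        omega
      have hlt : muM p t h d (m' + Finsupp.single h (p h)) < muM p t h d m := by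
        refine muM_lt p t h d m _ a hmem ?_ ?_
        · intro x hxF hxa
          have hxh : x ≠ h := Finset.ne_of_mem_erase hxF
          rw [Finsupp.add_apply, Finsupp.single_eq_of_ne' (Ne.symm hxh), add_zero,
            ← hmx x hxa]
        · rw [hva]
          have := hp a
          omega
      exact IH (muM p t h d (m' + Finsupp.single h (p h))) (lt_of_lt_of_le hlt hmu)
        _ k le_rfl hw2
  by_cases h3 : p h ≤ m h ∧ ∃ a, (a ≠ t ∧ a ≠ h) ∧ m a < d
  · obtain ⟨hph, a, ⟨hat, hah⟩, had⟩ := h3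
    obtain ⟨m', hm'⟩ := decomp_of_le m (Finsupp.single h (p h)) (by
      intro x
      rw [Finsupp.single_apply]
      split
      · next hh => subst hh; omega
      · exact Nat.zero_le _)
    obtain ⟨γ, δ', hid⟩ := (Hmv a hat hah).2
    have hmx : ∀ x, x ≠ h → m x = m' x := by
      intro x hx
      rw [hm', Finsupp.add_apply, Finsupp.single_eq_of_ne' (Ne.symm hx), add_zero]
    rw [hm', step_rewrite p lam m' h t a γ δ' hid]
    refine Submodule.add_mem _ (Submodule.smul_mem _ _ ?_) (Submodule.smul_mem _ _ ?_)
    · have hw1 : wtB p (m' + Finsupp.single t (p t)) = q • egen p t + k • sdeg p := by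
        rw [wt_swap p m' t h, ← hm', hw]
      refine doneT p lam R hR t q _ k _ hw1 ?_
      rw [Finsupp.add_apply, Finsupp.single_eq_same]
      omega
    · have hw2 : wtB p (m' + Finsupp.single a (p a)) = q • egen p t + k • sdeg p := by
        rw [wt_swap p m' a h, ← hm', hw]
      have hmem : a ∈ (Finset.univ.erase t).erase h :=
        Finset.mem_erase.mpr ⟨hah, Finset.mem_erase.mpr ⟨hat, Finset.mem_univ a⟩⟩
      have hva : (m' + Finsupp.single a (p a)) a = m a + p a := by
        rw [Finsupp.add_apply, Finsupp.single_eq_same, ← hmx a hah]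
      have hlt : muM p t h d (m' + Finsupp.single a (p a)) < muM p t h d m := by
        refine muM_lt p t h d m _ a hmem ?_ ?_
        · intro x hxF hxa
          have hxh : x ≠ h := Finset.ne_of_mem_erase hxF
          rw [Finsupp.add_apply, Finsupp.single_eq_of_ne' (Ne.symm hxa), add_zero,
            ← hmx x hxh]
        · rw [hva]
          have := hp a
          omega
      exact IH (muM p t h d (m' + Finsupp.single a (p a))) (lt_of_lt_of_le hlt hmu)
        _ k le_rfl hw2
  by_cases h4 : p h + d ≤ m h ∧ ∀ a, a ≠ t → a ≠ h → d ≤ m a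
  · refine doneG1 p lam R hR t h hth q d hqd k m hw ?_
    intro x
    rw [Esupp_apply p t h hth d x]
    split
    · next hh => subst hh; exact h4.1
    · split
      · next hh => subst hh; exact Nat.zero_le _
      · next hxh hxt => exact h4.2 x hxt hxh
  -- terminal situation : derive a contradiction
  exfalso
  push_neg at h2 h3 h4
  -- extract the residue data
  have hdvd : ∀ a : Fin n, (p a : ℤ) ∣ ((m a : ℤ) - (if a = t then (q : ℤ) else 0) - k) := by
    intro a
    have h5 := congrArg (resL p a) hw
    rw [resL_wtB, map_add, map_nsmul, map_zsmul, resL_egen, resL_sdeg,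
      nsmul_eq_mul, zsmul_eq_mul, mul_one] at h5
    rw [← ZMod.intCast_zmod_eq_zero_iff_dvd]
    push_cast
    rw [h5]
    split_ifs with hat
    · push_cast [if_pos hat]; ring
    · push_cast [if_neg hat]; ring
  set c : Fin n → ℤ := fun a => ((m a : ℤ) - (if a = t then (q : ℤ) else 0) - k) / (p a)
    with hcdef
  have hceq : ∀ a : Fin n, (m a : ℤ) = (if a = t then (q : ℤ) else 0) + k + p a * c a := by
    intro a
    have := Int.mul_ediv_cancel' (hdvd a)
    rw [hcdef]
    simp only []
    omega
  -- the degree equation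
  have h7 := congrArg (degL p) hw
  rw [degL_wtB, map_add, map_nsmul, map_zsmul, degL_egen, degL_sdeg,
    nsmul_eq_mul, zsmul_eq_mul, Int.cast_id] at h7
  have hsplit : ∀ a : Fin n, (m a : ℤ) * Pdiv p a
      = ((if a = t then (q : ℤ) else 0) * Pdiv p a + k * Pdiv p a) + c a * PP p := by
    intro a
    rw [hceq a, ← p_mul_Pdiv p a]
    ring
  have h9 : ∑ a, ((if a = t then (q : ℤ) else 0) * Pdiv p a + k * Pdiv p a)
      = (q : ℤ) * Pdiv p t + k * ∑ a, Pdiv p a := by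
    rw [Finset.sum_add_distrib, ← Finset.mul_sum]
    congr 1
    rw [Finset.sum_eq_single t]
    · rw [if_pos rfl]
    · intro b _ hb; rw [if_neg hb, zero_mul]
    · intro hx; exact absurd (Finset.mem_univ t) hx
  have h8 : ∑ a, (m a : ℤ) * Pdiv p a
      = ((q : ℤ) * Pdiv p t + k * ∑ a, Pdiv p a) + (∑ a, c a) * PP p := by
    rw [Finset.sum_congr rfl (fun a _ => hsplit a), Finset.sum_add_distrib, h9,
      Finset.sum_mul]
  have h10 : (∑ a, c a) * PP p = 0 := by
    rw [h8] at h7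
    linarith
  have hPP : PP p ≠ 0 := ne_of_gt (PP_pos p (fun a => le_trans one_le_two (hp a)))
  have hsum0 : ∑ a, c a = 0 := by
    rcases mul_eq_zero.mp h10 with hc0 | hc0
    · exact hc0
    · exact absurd hc0 hPP
  -- bounds
  have hbh : (m h : ℤ) ≤ (p h : ℤ) + d - 1 := by
    by_cases hcase : p h ≤ m h
    · by_contra hgt
      push_neg at hgt
      have hge : p h + d ≤ m h := by omega
      obtain ⟨a, hat, hah, hlt⟩ := h4 hge
      have := h3 hcase a ⟨hat, hah⟩
      omega
    · push_neg at hcase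
      have := hp h
      omega
  refine terminal_contradiction hn p hp t q d hq hqd k c (⇑m) ?_ ?_ hsum0 h1 ?_
  · have := hceq t
    rw [if_pos rfl] at this
    exact this
  · intro a hat
    have := hceq a
    rw [if_neg hat, zero_add] at this
    exact this
  · intro a hat
    rcases eq_or_ne a h with rfl | hah
    · exact hbh
    · have := h2 a ⟨hat, hah⟩
      omega

lemma sdeg_def : sdeg p = ∑ i, egen p i := rfl

lemma case_iff (hn : 3 ≤ n) (hp : ∀ a, 2 ≤ p a)
    (hR : Subalgebra.toSubmodule R = SVerB n p lam (∑ i, egen p i))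
    (t h : Fin n) (hth : t ≠ h) (q d : ℕ) (hq : 1 ≤ q) (hqd : q + d = p t)
    (Hmv : ∀ a, a ≠ t → a ≠ h →
      (∃ α β : ℂ, Ideal.Quotient.mk (BIdl n p lam) (MvPolynomial.X a ^ p a)
        = α • Ideal.Quotient.mk (BIdl n p lam) (MvPolynomial.X t ^ p t)
          + β • Ideal.Quotient.mk (BIdl n p lam) (MvPolynomial.X h ^ p h)) ∧
      (∃ γ δ' : ℂ, Ideal.Quotient.mk (BIdl n p lam) (MvPolynomial.X h ^ p h)
        = γ • Ideal.Quotient.mk (BIdl n p lam) (MvPolynomial.X t ^ p t)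
          + δ' • Ideal.Quotient.mk (BIdl n p lam) (MvPolynomial.X a ^ p a))) :
    ∀ w : BAlg n p lam,
      w ∈ SShiftB n p lam (q • egen p t) (∑ i, egen p i) ↔
        ∃ r₁ ∈ R, ∃ r₂ ∈ R,
          w = r₁ * Ideal.Quotient.mk (BIdl n p lam)
                (MvPolynomial.X h ^ p h * (∏ a ∈ Finset.univ.erase t, MvPolynomial.X a) ^ d) +
              r₂ * Ideal.Quotient.mk (BIdl n p lam) (MvPolynomial.X t ^ q) := by
  have hG1 : (MvPolynomial.X h ^ p h
        * (∏ a ∈ Finset.univ.erase t, MvPolynomial.X a) ^ d : BPoly n)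
      = MvPolynomial.monomial (Esupp p t h d) 1 := by
    rw [← Finset.prod_pow]
    have hXp : ∀ a ∈ Finset.univ.erase t, (MvPolynomial.X a : BPoly n) ^ d
        = MvPolynomial.monomial (Finsupp.single a d) 1 :=
      fun a _ => MvPolynomial.X_pow_eq_monomial
    rw [Finset.prod_congr rfl hXp, prod_monomial_one, MvPolynomial.X_pow_eq_monomial,
      monomial_one_mul, Esupp]
  have hG2 : (MvPolynomial.X t ^ q : BPoly n)
      = MvPolynomial.monomial (Finsupp.single t q) 1 := MvPolynomial.X_pow_eq_monomial
  intro w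
  constructor
  · intro hwmem
    have hle : SShiftB n p lam (q • egen p t) (∑ i, egen p i)
        ≤ PsubM p lam R t q (Esupp p t h d) := by
      rw [SShiftB]
      refine iSup_le fun k => ?_
      refine SCompB_le_of_monomials p lam _ _ fun u hu => ?_
      refine engine p lam R hn hp hR t h hth q d hq hqd Hmv (muM p t h d u) u k le_rfl ?_
      rw [sdeg_def]
      exact hu
    have hmem := hle hwmem
    rw [PsubM, Submodule.add_eq_sup, Submodule.mem_sup] at hmem
    obtain ⟨x, hx, y, hy, hxy⟩ := hmem
    obtain ⟨r₁, hr₁, rfl⟩ := mem_mul_span_singleton _ _ _ hx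
    obtain ⟨r₂, hr₂, rfl⟩ := mem_mul_span_singleton _ _ _ hy
    refine ⟨r₁, hr₁, r₂, hr₂, ?_⟩
    rw [← hxy, hG1, hG2]
  · rintro ⟨r₁, hr₁, r₂, hr₂, rfl⟩
    have key : ∀ (g : BPoly n) (y' : LGroup (Fin n) p), g ∈ polyCompB p y' →
        (∀ k : ℤ, ∃ k' : ℤ, (k : ℤ) • (∑ i, egen p i) + y'
          = q • egen p t + k' • (∑ i, egen p i)) →
        ∀ r ∈ R, r * Ideal.Quotient.mk (BIdl n p lam) g
          ∈ SShiftB n p lam (q • egen p t) (∑ i, egen p i) := by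
      intro g y' hg hidx r hr
      have hr' : r ∈ SVerB n p lam (∑ i, egen p i) := by
        rw [← hR]
        exact hr
      rw [SVerB] at hr'
      refine Submodule.iSup_induction
        (motive := fun x => x * Ideal.Quotient.mk (BIdl n p lam) g
          ∈ SShiftB n p lam (q • egen p t) (∑ i, egen p i))
        _ hr' ?_ ?_ ?_
      · intro k x hx
        have hgmem : Ideal.Quotient.mk (BIdl n p lam) g ∈ SCompB n p lam y' := by
          rw [mem_SCompB_iff]
          exact ⟨g, hg, rfl⟩
        have hprod := mul_mem_SCompB p lam hx hgmem
        obtain ⟨k', hk'⟩ := hidx k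
        rw [hk'] at hprod
        rw [SShiftB]
        exact le_iSup (fun k : ℤ => SCompB n p lam
          (q • egen p t + k • (∑ i, egen p i))) k' hprod
      · simp only [zero_mul]
        exact Submodule.zero_mem _
      · intro x y hx hy
        simp only [add_mul]
        exact Submodule.add_mem _ hx hy
    refine Submodule.add_mem _ ?_ ?_
    · refine key _ (wtB p (Esupp p t h d)) (by rw [hG1]; exact monomial_mem_polyCompB p _ 1)
        ?_ r₁ hr₁
      intro k
      refine ⟨k + d, ?_⟩
      rw [← sdeg_def, wt_Esupp p t h hth q d hqd, add_zsmul]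
      abel
    · refine key _ (wtB p (Finsupp.single t q)) (by rw [hG2]; exact monomial_mem_polyCompB p _ 1)
        ?_ r₂ hr₂
      intro k
      refine ⟨k, ?_⟩
      rw [← sdeg_def, wtB_single]
      abel

lemma rel_mk (hn2 : 2 ≤ n) (a : Fin n) (ha : 2 ≤ (a : ℕ)) :
    Ideal.Quotient.mk (BIdl n p lam) (MvPolynomial.X a ^ p a)
      = lam a • Ideal.Quotient.mk (BIdl n p lam) (MvPolynomial.X 1 ^ p 1)
        - Ideal.Quotient.mk (BIdl n p lam) (MvPolynomial.X 0 ^ p 0) := by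
  have hmem : (MvPolynomial.X a ^ p a + MvPolynomial.X 0 ^ p 0
      - MvPolynomial.C (lam a) * MvPolynomial.X 1 ^ p 1 : BPoly n) ∈ BIdl n p lam :=
    Ideal.subset_span ⟨a, ha, rfl⟩
  have h0 := Ideal.Quotient.eq_zero_iff_mem.mpr hmem
  rw [map_sub, map_add, map_mul] at h0
  have hC : Ideal.Quotient.mk (BIdl n p lam) (MvPolynomial.C (lam a))
      * Ideal.Quotient.mk (BIdl n p lam) (MvPolynomial.X 1 ^ p 1)
      = lam a • Ideal.Quotient.mk (BIdl n p lam) (MvPolynomial.X 1 ^ p 1) := by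
    have hA : Ideal.Quotient.mk (BIdl n p lam) (MvPolynomial.C (lam a))
        = algebraMap ℂ (BAlg n p lam) (lam a) := by
      rw [← MvPolynomial.algebraMap_eq, ← Ideal.Quotient.mkₐ_eq_mk ℂ, AlgHom.commutes]
    rw [hA, ← Algebra.smul_def]
  rw [hC, sub_eq_zero] at h0
  exact eq_sub_of_add_eq h0

lemma inv_combo {V : Type*} [AddCommGroup V] [Module ℂ V] (c : ℂ) (hc : c ≠ 0)
    (x y z : V) (hx : c • x = y + z) : x = c⁻¹ • y + c⁻¹ • z := by
  have := congrArg (fun w => c⁻¹ • w) hx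
  simp only [smul_add] at this
  rwa [inv_smul_smul₀ hc] at this

end Engine

end St14

/-- With `R = S^s`, the shifted modules `S(qeⱼ)^s` and `S(c)^s` are
`2`-generated `R`-submodules of `S`, with the explicit generators below. -/
theorem shifted_modules_two_generated (n : ℕ) (hn : 3 ≤ n) [NeZero n] (p : Fin n → ℕ)
    (hp : ∀ i, 2 ≤ p i) (lam : Fin n → ℂ)
    (hlam0 : ∀ i : Fin n, 2 ≤ (i : ℕ) → lam i ≠ 0)
    (hlamd : ∀ i j : Fin n, 2 ≤ (i : ℕ) → 2 ≤ (j : ℕ) → i ≠ j → lam i ≠ lam j)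
    (R : Subalgebra ℂ (BAlg n p lam))
    (hR : Subalgebra.toSubmodule R = SVerB n p lam (∑ i, egen p i)) :
    (∀ q : ℕ, 1 ≤ q → q ≤ p 0 → ∀ w : BAlg n p lam,
      (w ∈ SShiftB n p lam (q • egen p 0) (∑ i, egen p i) ↔
        ∃ r₁ ∈ R, ∃ r₂ ∈ R,
          w = r₁ * Ideal.Quotient.mk (BIdl n p lam)
                (X 1 ^ p 1 * (∏ k ∈ Finset.univ.erase (0 : Fin n), X k) ^ (p 0 - q)) +
              r₂ * Ideal.Quotient.mk (BIdl n p lam) (X 0 ^ q))) ∧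
    (∀ q : ℕ, 1 ≤ q → q ≤ p 1 → ∀ w : BAlg n p lam,
      (w ∈ SShiftB n p lam (q • egen p 1) (∑ i, egen p i) ↔
        ∃ r₁ ∈ R, ∃ r₂ ∈ R,
          w = r₁ * Ideal.Quotient.mk (BIdl n p lam)
                (X 0 ^ p 0 * (∏ k ∈ Finset.univ.erase (1 : Fin n), X k) ^ (p 1 - q)) +
              r₂ * Ideal.Quotient.mk (BIdl n p lam) (X 1 ^ q))) ∧
    (∀ i : Fin n, 2 ≤ (i : ℕ) → ∀ q : ℕ, 1 ≤ q → q ≤ p i → ∀ w : BAlg n p lam,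
      (w ∈ SShiftB n p lam (q • egen p i) (∑ i, egen p i) ↔
        ∃ r₁ ∈ R, ∃ r₂ ∈ R,
          w = r₁ * Ideal.Quotient.mk (BIdl n p lam)
                (X 1 ^ p 1 * (∏ k ∈ Finset.univ.erase i, X k) ^ (p i - q)) +
              r₂ * Ideal.Quotient.mk (BIdl n p lam) (X i ^ q))) ∧
    (∀ w : BAlg n p lam,
      (w ∈ SShiftB n p lam (cgen p) (∑ i, egen p i) ↔
        ∃ r₁ ∈ R, ∃ r₂ ∈ R,
          w = r₁ * Ideal.Quotient.mk (BIdl n p lam) (X 0 ^ p 0) +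
              r₂ * Ideal.Quotient.mk (BIdl n p lam) (X 1 ^ p 1))) := by
  classical
  have v0 : ((0 : Fin n) : ℕ) = 0 := rfl
  have v1 : ((1 : Fin n) : ℕ) = 1 := by
    rw [Fin.val_one']
    exact Nat.mod_eq_of_lt (by omega)
  have h01 : (0 : Fin n) ≠ (1 : Fin n) := by
    intro e
    have := congrArg Fin.val e
    rw [v0, v1] at this
    omega
  have val2 : ∀ a : Fin n, a ≠ 0 → a ≠ 1 → 2 ≤ (a : ℕ) := by
    intro a ha0 ha1
    have hh0 : (a : ℕ) ≠ 0 := fun hh => ha0 (Fin.ext (by rw [hh, v0]))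
    have hh1 : (a : ℕ) ≠ 1 := fun hh => ha1 (Fin.ext (by rw [hh, v1]))
    omega
  -- identity package for t = 0, h = 1
  have mv01 : ∀ a : Fin n, a ≠ 0 → a ≠ 1 →
      (∃ α β : ℂ, Ideal.Quotient.mk (BIdl n p lam) (X a ^ p a)
        = α • Ideal.Quotient.mk (BIdl n p lam) (X (0 : Fin n) ^ p 0)
          + β • Ideal.Quotient.mk (BIdl n p lam) (X (1 : Fin n) ^ p 1)) ∧
      (∃ γ δ' : ℂ, Ideal.Quotient.mk (BIdl n p lam) (X (1 : Fin n) ^ p 1)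
        = γ • Ideal.Quotient.mk (BIdl n p lam) (X (0 : Fin n) ^ p 0)
          + δ' • Ideal.Quotient.mk (BIdl n p lam) (X a ^ p a)) := by
    intro a ha0 ha1
    have ha2 := val2 a ha0 ha1
    have hrel := St14.rel_mk p lam (by omega) a ha2
    constructor
    · exact ⟨-1, lam a, by rw [hrel, neg_smul, one_smul]; abel⟩
    · refine ⟨(lam a)⁻¹, (lam a)⁻¹, ?_⟩
      have hx : lam a • Ideal.Quotient.mk (BIdl n p lam) (X (1 : Fin n) ^ p 1)
          = Ideal.Quotient.mk (BIdl n p lam) (X (0 : Fin n) ^ p 0)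
            + Ideal.Quotient.mk (BIdl n p lam) (X a ^ p a) := by
        rw [hrel]
        abel
      exact St14.inv_combo (lam a) (hlam0 a ha2) _ _ _ hx
  -- identity package for t = 1, h = 0
  have mv10 : ∀ a : Fin n, a ≠ 1 → a ≠ 0 →
      (∃ α β : ℂ, Ideal.Quotient.mk (BIdl n p lam) (X a ^ p a)
        = α • Ideal.Quotient.mk (BIdl n p lam) (X (1 : Fin n) ^ p 1)
          + β • Ideal.Quotient.mk (BIdl n p lam) (X (0 : Fin n) ^ p 0)) ∧
      (∃ γ δ' : ℂ, Ideal.Quotient.mk (BIdl n p lam) (X (0 : Fin n) ^ p 0)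
        = γ • Ideal.Quotient.mk (BIdl n p lam) (X (1 : Fin n) ^ p 1)
          + δ' • Ideal.Quotient.mk (BIdl n p lam) (X a ^ p a)) := by
    intro a ha1 ha0
    have ha2 := val2 a ha0 ha1
    have hrel := St14.rel_mk p lam (by omega) a ha2
    constructor
    · exact ⟨lam a, -1, by rw [hrel, neg_smul, one_smul]; abel⟩
    · refine ⟨lam a, -1, ?_⟩
      rw [neg_smul, one_smul]
      rw [hrel]
      abel
  -- identity package for t = j (j ≥ 2), h = 1
  have mvj : ∀ j : Fin n, j ≠ 0 → j ≠ 1 → ∀ a : Fin n, a ≠ j → a ≠ 1 →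
      (∃ α β : ℂ, Ideal.Quotient.mk (BIdl n p lam) (X a ^ p a)
        = α • Ideal.Quotient.mk (BIdl n p lam) (X j ^ p j)
          + β • Ideal.Quotient.mk (BIdl n p lam) (X (1 : Fin n) ^ p 1)) ∧
      (∃ γ δ' : ℂ, Ideal.Quotient.mk (BIdl n p lam) (X (1 : Fin n) ^ p 1)
        = γ • Ideal.Quotient.mk (BIdl n p lam) (X j ^ p j)
          + δ' • Ideal.Quotient.mk (BIdl n p lam) (X a ^ p a)) := by
    intro j hj0 hj1 a haj ha1
    have hj2 := val2 j hj0 hj1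
    have hrelj := St14.rel_mk p lam (by omega) j hj2
    rcases eq_or_ne a 0 with rfl | ha0
    · constructor
      · refine ⟨-1, lam j, ?_⟩
        rw [neg_smul, one_smul, hrelj]
        abel
      · refine ⟨(lam j)⁻¹, (lam j)⁻¹, ?_⟩
        have hx : lam j • Ideal.Quotient.mk (BIdl n p lam) (X (1 : Fin n) ^ p 1)
            = Ideal.Quotient.mk (BIdl n p lam) (X j ^ p j)
              + Ideal.Quotient.mk (BIdl n p lam) (X (0 : Fin n) ^ p 0) := by
          rw [hrelj]
          abel
        exact St14.inv_combo (lam j) (hlam0 j hj2) _ _ _ hx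
    · have ha2 := val2 a ha0 ha1
      have hrela := St14.rel_mk p lam (by omega) a ha2
      have hdiff : Ideal.Quotient.mk (BIdl n p lam) (X a ^ p a)
          = Ideal.Quotient.mk (BIdl n p lam) (X j ^ p j)
            + (lam a - lam j) • Ideal.Quotient.mk (BIdl n p lam) (X (1 : Fin n) ^ p 1) := by
        rw [hrela, hrelj, sub_smul]
        abel
      have hne : lam a - lam j ≠ 0 := sub_ne_zero.mpr (hlamd a j ha2 hj2 haj)
      constructor
      · exact ⟨1, lam a - lam j, by rw [hdiff, one_smul]⟩
      · refine ⟨-(lam a - lam j)⁻¹, (lam a - lam j)⁻¹, ?_⟩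
        have hx : (lam a - lam j) • Ideal.Quotient.mk (BIdl n p lam) (X (1 : Fin n) ^ p 1)
            = (- Ideal.Quotient.mk (BIdl n p lam) (X j ^ p j))
              + Ideal.Quotient.mk (BIdl n p lam) (X a ^ p a) := by
          rw [hdiff]
          abel
        have hcom := St14.inv_combo _ hne _ _ _ hx
        rw [smul_neg] at hcom
        rw [hcom, neg_smul]
  refine ⟨?_, ?_, ?_, ?_⟩
  · -- case (i)
    intro q hq1 hqp w
    exact St14.case_iff p lam R hn hp hR 0 1 h01 q (p 0 - q) hq1 (by omega)
      (fun a hat hah => mv01 a hat hah) w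
  · -- case (ii)
    intro q hq1 hqp w
    exact St14.case_iff p lam R hn hp hR 1 0 (Ne.symm h01) q (p 1 - q) hq1 (by omega)
      (fun a hat hah => mv10 a hat hah) w
  · -- case (iii)
    intro i hi2 q hq1 hqp w
    have hi0 : i ≠ 0 := by
      intro e
      rw [e, v0] at hi2
      omega
    have hi1 : i ≠ 1 := by
      intro e
      rw [e, v1] at hi2
      omega
    exact St14.case_iff p lam R hn hp hR i 1 hi1 q (p i - q) hq1 (by omega)
      (fun a hat hah => mvj i hi0 hi1 a hat hah) w
  · -- case (iv)
    intro w
    have hiff := St14.case_iff p lam R hn hp hR 0 1 h01 (p 0) 0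
      (by have := hp 0; omega) (by omega) (fun a hat hah => mv01 a hat hah) w
    have hpow : (X (1 : Fin n) ^ p 1
          * (∏ a ∈ Finset.univ.erase (0 : Fin n), X a) ^ (0 : ℕ) : BPoly n)
        = X (1 : Fin n) ^ p 1 := by
      rw [pow_zero, mul_one]
    rw [hpow] at hiff
    rw [← St14.psmul_egen p 0, hiff]
    constructor
    · rintro ⟨r₁, hr₁, r₂, hr₂, rfl⟩
      exact ⟨r₂, hr₂, r₁, hr₁, by rw [add_comm]⟩
    · rintro ⟨r₁, hr₁, r₂, hr₂, rfl⟩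
      exact ⟨r₂, hr₂, r₁, hr₁, by rw [add_comm]⟩
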